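/- Let ⟨·,·⟩ be a Hopf pairing between Hopf algebras A and B over a field k, and let D(A, B) be the double. Let g ∈ A and h ∈ B be grouplike, let a ∈ A satisfy Δ_A(a) = a ⊗ 1 + g ⊗ a, and let b ∈ B satisfy Δ_B(b) = 1 ⊗ b + b ⊗ h. Assume ⟨a, h⟩ = 0 and ⟨g, S_B(b)⟩ = 0. Then in D(A, B): (1 ⊗ b)·(a ⊗ 1) = a ⊗ b + ⟨a, S_B(b)⟩ (1 ⊗ h) + ⟨a, b⟩ (g ⊗ 1). -/

import Mathlib

open TensorProduct HopfAlgebra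

variable {k A B : Type*} [Field k] [Ring A] [Ring B] [HopfAlgebra k A] [HopfAlgebra k B]

/-- A Hopf pairing between Hopf algebras `A` and `B` over `k`, whose antipodes are
bijective with given inverses `SAinv` and `SBinv`.  The Sweedler sums
`⟨a, bb'⟩ = Σ ⟨a₍₁₎, b⟩⟨a₍₂₎, b'⟩` and `⟨aa', b⟩ = Σ ⟨a, b₍₂₎⟩⟨a', b₍₁₎⟩`
are expressed using (arbitrary) finite representations of the comultiplications. -/
structure IsHopfPairing (p : A →ₗ[k] B →ₗ[k] k) (SAinv : A →ₗ[k] A) (SBinv : B →ₗ[k] B) :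
    Prop where
  SAinv_antipode : ∀ a : A, SAinv (antipode (R := k) a) = a
  antipode_SAinv : ∀ a : A, antipode (R := k) (SAinv a) = a
  SBinv_antipode : ∀ b : B, SBinv (antipode (R := k) b) = b
  antipode_SBinv : ∀ b : B, antipode (R := k) (SBinv b) = b
  pair_mul_right : ∀ (a : A) (b b' : B) {ι : Type*} (r : Coalgebra.Repr k a ι),
    p a (b * b') = ∑ i ∈ r.index, p (r.left i) b * p (r.right i) b'
  pair_mul_left : ∀ (a a' : A) (b : B) {ι : Type*} (r : Coalgebra.Repr k b ι),
    p (a * a') b = ∑ i ∈ r.index, p a (r.right i) * p a' (r.left i)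
  pair_one_right : ∀ a : A, p a 1 = Coalgebra.counit (R := k) a
  pair_one_left : ∀ b : B, p 1 b = Coalgebra.counit (R := k) b
  pair_antipode : ∀ (a : A) (b : B), p (antipode (R := k) a) b = p a (SBinv b)

variable (k) in
/-- `m` is the multiplication of the double `D(A, B)` associated to the pairing `p`:
`(a ⊗ b)·(a' ⊗ b') = Σ ⟨a'₍₁₎, S_B(b₍₁₎)⟩ ⟨a'₍₃₎, b₍₃₎⟩ (a a'₍₂₎) ⊗ (b₍₂₎ b')`,
where the Sweedler sums over `(Δ_A ⊗ id)Δ_A(a')` and `(Δ_B ⊗ id)Δ_B(b)` are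
expressed via (arbitrary) iterated finite representations of the comultiplications. -/
def IsDoubleMul (p : A →ₗ[k] B →ₗ[k] k)
    (m : A ⊗[k] B →ₗ[k] A ⊗[k] B →ₗ[k] A ⊗[k] B) : Prop :=
  ∀ (a a' : A) (b b' : B)
    (ιa : Type) (ra : Coalgebra.Repr k a' ιa) (κa : ιa → Type)
    (ra2 : (i' : ιa) → Coalgebra.Repr k (ra.left i') (κa i'))
    (ιb : Type) (rb : Coalgebra.Repr k b ιb) (κb : ιb → Type)
    (rb2 : (i : ιb) → Coalgebra.Repr k (rb.left i) (κb i)),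
    m (a ⊗ₜ b) (a' ⊗ₜ b') =
      ∑ i ∈ rb.index, ∑ j ∈ (rb2 i).index, ∑ i' ∈ ra.index, ∑ j' ∈ (ra2 i').index,
        (p ((ra2 i').left j') (antipode (R := k) ((rb2 i).left j)) *
            p (ra.right i') (rb.right i)) •
          ((a * (ra2 i').right j') ⊗ₜ[k] ((rb2 i).right j * b'))

private lemma antipodeOne {k B : Type*} [Field k] [Ring B] [HopfAlgebra k B] :
    antipode (R := k) (1 : B) = 1 := by
  have := HopfAlgebra.sum_antipode_mul_eq_algebraMap_counit (R := k)
    (⟨(Finset.univ : Finset (Fin 1)), ![1], ![1], by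
      simp [Algebra.TensorProduct.one_def]⟩ : Coalgebra.Repr k (1 : B) (Fin 1))
  simpa using this

private lemma counit_skewA (g a : A) (hg1 : Coalgebra.counit (R := k) g = 1)
    (ha : Coalgebra.comul (R := k) a = a ⊗ₜ[k] (1 : A) + g ⊗ₜ[k] a) :
    Coalgebra.counit (R := k) a = 0 := by
  have h1 := Coalgebra.rTensor_counit_comul (R := k) a
  rw [ha, map_add] at h1
  simp only [LinearMap.rTensor_tmul, hg1] at h1
  have h2 : (Coalgebra.counit (R := k) a) ⊗ₜ[k] (1 : A) = 0 := by
    have := congrArg (fun x => x - (1 : k) ⊗ₜ[k] a) h1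
    simpa using this
  have h3 : (Coalgebra.counit (R := k) a) • ((1:k) ⊗ₜ[k] (1 : A)) = 0 := by
    rw [smul_tmul', smul_eq_mul, mul_one]; exact h2
  by_contra hne
  have h4 : ((1:k) ⊗ₜ[k] (1 : A)) = 0 := by
    have := congrArg (fun x => (Coalgebra.counit (R := k) a)⁻¹ • x) h3
    simpa [smul_smul, inv_mul_cancel₀ hne] using this
  have h5 : (1 : A) = 0 := by
    have := congrArg (TensorProduct.lid k A) h4
    simpa using this
  have ha0 : a = 0 := by
    calc a = (1:A) * a := (one_mul a).symm
    _ = 0 := by rw [h5, zero_mul]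
  rw [ha0] at hne; exact hne (map_zero _)

private lemma counit_skewB (h b : B) (hh1 : Coalgebra.counit (R := k) h = 1)
    (hb : Coalgebra.comul (R := k) b = (1 : B) ⊗ₜ[k] b + b ⊗ₜ[k] h) :
    Coalgebra.counit (R := k) b = 0 := by
  have h1 := Coalgebra.lTensor_counit_comul (R := k) b
  rw [hb, map_add] at h1
  simp only [LinearMap.lTensor_tmul, hh1] at h1
  have h2 : (1 : B) ⊗ₜ[k] (Coalgebra.counit (R := k) b) = 0 := by
    have := congrArg (fun x => x - b ⊗ₜ[k] (1 : k)) h1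
    simpa [add_comm] using this
  have h3 : (Coalgebra.counit (R := k) b) • ((1:B) ⊗ₜ[k] (1 : k)) = 0 := by
    rw [← tmul_smul, smul_eq_mul, mul_one]; exact h2
  by_contra hne
  have h4 : ((1:B) ⊗ₜ[k] (1 : k)) = 0 := by
    have := congrArg (fun x => (Coalgebra.counit (R := k) b)⁻¹ • x) h3
    simpa [smul_smul, inv_mul_cancel₀ hne] using this
  have h5 : (1 : B) = 0 := by
    have := congrArg (TensorProduct.rid k B) h4
    simpa using this
  have hb0 : b = 0 := by
    calc b = (1:B) * b := (one_mul b).symm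
    _ = 0 := by rw [h5, zero_mul]
  rw [hb0] at hne; exact hne (map_zero _)

private def repA (g a : A)
    (ha : Coalgebra.comul (R := k) a = a ⊗ₜ[k] (1 : A) + g ⊗ₜ[k] a) :
    Coalgebra.Repr k a (Fin 2) where
  index := Finset.univ
  left := ![a, g]
  right := ![1, a]
  eq := by simp [Fin.sum_univ_two, ha]

private def repG (g : A) (hg : Coalgebra.comul (R := k) g = g ⊗ₜ[k] g) :
    Coalgebra.Repr k g (Fin 1) where
  index := Finset.univ
  left := ![g]
  right := ![g]
  eq := by simp [hg]

private def repOneB : Coalgebra.Repr k (1 : B) (Fin 1) where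
  index := Finset.univ
  left := ![1]
  right := ![1]
  eq := by simp [Algebra.TensorProduct.one_def]

private def repB (h b : B)
    (hb : Coalgebra.comul (R := k) b = (1 : B) ⊗ₜ[k] b + b ⊗ₜ[k] h) :
    Coalgebra.Repr k b (Fin 2) where
  index := Finset.univ
  left := ![1, b]
  right := ![b, h]
  eq := by simp [Fin.sum_univ_two, hb]

private def repA2 (g a : A)
    (ha : Coalgebra.comul (R := k) a = a ⊗ₜ[k] (1 : A) + g ⊗ₜ[k] a)
    (hg : Coalgebra.comul (R := k) g = g ⊗ₜ[k] g) :
    (i : (repA g a ha).ι) → Coalgebra.Repr k ((repA g a ha).left i) (![Fin 2, Fin 1] i) :=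
  fun i => Fin.cases (motive := fun i => Coalgebra.Repr k ((repA g a ha).left i) (![Fin 2, Fin 1] i))
    (repA g a ha) (fun j => Fin.cases (motive := fun j =>
      Coalgebra.Repr k ((repA g a ha).left j.succ) (![Fin 2, Fin 1] j.succ)) (repG g hg) (fun j => j.elim0) j) i

private def repB2 (h b : B)
    (hb : Coalgebra.comul (R := k) b = (1 : B) ⊗ₜ[k] b + b ⊗ₜ[k] h) :
    (i : (repB h b hb).ι) → Coalgebra.Repr k ((repB h b hb).left i) (![Fin 1, Fin 2] i) :=
  fun i => Fin.cases (motive := fun i => Coalgebra.Repr k ((repB h b hb).left i) (![Fin 1, Fin 2] i))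
    repOneB (fun j => Fin.cases (motive := fun j =>
      Coalgebra.Repr k ((repB h b hb).left j.succ) (![Fin 1, Fin 2] j.succ)) (repB h b hb) (fun j => j.elim0) j) i

/-- The abstract form of the relation between the currents `x⁺` and `x⁻` producing the
Cartan currents: for grouplike `g ∈ A`, `h ∈ B`, a skew-primitive `a ∈ A` with
`Δ_A(a) = a ⊗ 1 + g ⊗ a`, and a skew-primitive `b ∈ B` with `Δ_B(b) = 1 ⊗ b + b ⊗ h`,
assuming `⟨a, h⟩ = 0` and `⟨g, S_B(b)⟩ = 0`, one has in the double `D(A, B)`: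
`(1 ⊗ b)·(a ⊗ 1) = a ⊗ b + ⟨a, S_B(b)⟩ (1 ⊗ h) + ⟨a, b⟩ (g ⊗ 1)`. -/
theorem double_skewPrimitive_commutator
    (p : A →ₗ[k] B →ₗ[k] k) (SAinv : A →ₗ[k] A) (SBinv : B →ₗ[k] B)
    (hp : IsHopfPairing p SAinv SBinv)
    (m : A ⊗[k] B →ₗ[k] A ⊗[k] B →ₗ[k] A ⊗[k] B) (hm : IsDoubleMul k p m)
    (g : A) (hg : Coalgebra.comul (R := k) g = g ⊗ₜ[k] g)
    (hg1 : Coalgebra.counit (R := k) g = 1)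
    (h : B) (hh : Coalgebra.comul (R := k) h = h ⊗ₜ[k] h)
    (hh1 : Coalgebra.counit (R := k) h = 1)
    (a : A) (ha : Coalgebra.comul (R := k) a = a ⊗ₜ[k] (1 : A) + g ⊗ₜ[k] a)
    (b : B) (hb : Coalgebra.comul (R := k) b = (1 : B) ⊗ₜ[k] b + b ⊗ₜ[k] h)
    (hah : p a h = 0) (hgb : p g (antipode (R := k) b) = 0) :
    m ((1 : A) ⊗ₜ[k] b) (a ⊗ₜ[k] (1 : B)) =
      a ⊗ₜ[k] b + p a (antipode (R := k) b) • ((1 : A) ⊗ₜ[k] h) +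
        p a b • (g ⊗ₜ[k] (1 : B)) := by
  have hεa : Coalgebra.counit (R := k) a = 0 := counit_skewA g a hg1 ha
  have hεb : Coalgebra.counit (R := k) b = 0 := counit_skewB h b hh1 hb
  have hS1 : antipode (R := k) (1 : B) = 1 := antipodeOne
  rw [hm 1 a b 1 (Fin 2) (repA g a ha) _ (repA2 g a ha hg) (Fin 2) (repB h b hb) _ (repB2 h b hb)]
  have e0 : repA2 g a ha hg 0 = repA g a ha := rfl
  have e1 : repA2 g a ha hg (Fin.succ 0) = repG g hg := rfl
  have f0 : repB2 h b hb 0 = repOneB := rfl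
  have f1 : repB2 h b hb (Fin.succ 0) = repB h b hb := rfl
  simp only [repA, repB, Fin.sum_univ_succ, Fin.sum_univ_zero, e0, e1, f0, f1, Finset.sum_const_zero,
    add_zero]
  simp only [repA, repA2, repB, repB2, repG, repOneB, Fin.sum_univ_succ, Fin.sum_univ_zero,
    Fin.cases_zero, Fin.cases_succ, Matrix.cons_val_zero, Matrix.cons_val_succ, hS1,
    hp.pair_one_right, hp.pair_one_left, hεa, hεb, hg1, hh1, hah, hgb,
    one_mul, mul_one, zero_mul, mul_zero, zero_smul, one_smul, add_zero, zero_add]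
  erw [Fin.sum_univ_one, Fin.sum_univ_two]
  simp only [Matrix.cons_val_zero, Matrix.cons_val_one, Matrix.head_cons, Finset.sum_const_zero, hS1,
    hp.pair_one_right, hp.pair_one_left, hεa, hεb, hg1, hh1, hah, hgb,
    one_mul, mul_one, zero_mul, mul_zero, zero_smul, one_smul, add_zero, zero_add]
  abel
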